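/- Let 0 < η < 1, τ > 0, and let δ : [0,∞) → [0,∞) be continuously differentiable with δ(s) ≤ τ and δ'(s) ≤ η for all s ≥ 0, and let t₀ ≥ 0 satisfy δ(t₀) = t₀. Let φ : ℝ → [0,∞) be continuous and let γ ∈ ℝ. Then for every t ≥ t₀, ∫_{t₀}^{t} (1+s)^{γ−1} φ(s − δ(s)) ds ≤ ( max(1, (1+τ)^{γ−1}) / (1−η) ) ∫_{0}^{t−δ(t)} (1+r)^{γ−1} φ(r) dr. -/

import Mathlib

open Set MeasureTheory

set_option maxHeartbeats 1000000

/-- Weighted change-of-variables estimate for a bounded delay `δ ≤ τ`: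
`∫_{t₀}^{t} (1+s)^{γ−1} φ(s − δ(s)) ds
  ≤ (max(1,(1+τ)^{γ−1})/(1−η)) ∫_{0}^{t−δ(t)} (1+r)^{γ−1} φ(r) dr`. -/
theorem delay_weighted_change_of_variables_estimate
    (η τ : ℝ) (hη0 : 0 < η) (hη1 : η < 1) (hτ : 0 < τ)
    (δ δ' : ℝ → ℝ)
    (hδ_nonneg : ∀ s, 0 ≤ s → 0 ≤ δ s)
    (hδ_le : ∀ s, 0 ≤ s → δ s ≤ τ)
    (hδ_deriv : ∀ s, 0 ≤ s → HasDerivAt δ (δ' s) s)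
    (hδ'_cont : ContinuousOn δ' (Ici 0))
    (hδ'_le : ∀ s, 0 ≤ s → δ' s ≤ η)
    (t₀ : ℝ) (ht₀ : 0 ≤ t₀) (hfix : δ t₀ = t₀)
    (φ : ℝ → ℝ) (hφ_cont : Continuous φ) (hφ_nonneg : ∀ r, 0 ≤ φ r)
    (γ : ℝ) :
    ∀ t, t₀ ≤ t →
      ∫ s in t₀..t, (1 + s) ^ (γ - 1) * φ (s - δ s) ≤
        (max 1 ((1 + τ) ^ (γ - 1)) / (1 - η)) *
          ∫ r in (0 : ℝ)..(t - δ t), (1 + r) ^ (γ - 1) * φ r := by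
  intro t ht
  set M : ℝ := max 1 ((1 + τ) ^ (γ - 1)) with hM
  have hM1 : (1:ℝ) ≤ M := le_max_left _ _
  have hM0 : (0:ℝ) ≤ M := zero_le_one.trans hM1
  have h1η : (0:ℝ) < 1 - η := by linarith
  set c : ℝ := M / (1 - η) with hc
  set g : ℝ → ℝ := fun s => s - δ s with hg
  set F : ℝ → ℝ := fun r => (1 + max r 0) ^ (γ - 1) * φ r with hF
  have hFcont : Continuous F := by
    apply Continuous.mul _ hφ_cont
    apply Continuous.rpow_const (continuous_const.add (continuous_id.max continuous_const))
    intro x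
    exact Or.inl (show (1:ℝ) + max x 0 ≠ 0 by positivity)
  have huIcc : uIcc t₀ t = Icc t₀ t := uIcc_of_le ht
  -- derivative of g
  have hgder : ∀ s, 0 ≤ s → HasDerivAt g (1 - δ' s) s := fun s hs =>
    (hasDerivAt_id s).sub (hδ_deriv s hs)
  have hgcont : ContinuousOn g (Icc t₀ t) := fun s hs =>
    ((hgder s (ht₀.trans hs.1)).continuousAt).continuousWithinAt
  -- monotonicity of g on [t₀, t]
  have hmono : MonotoneOn g (Icc t₀ t) := by
    apply monotoneOn_of_deriv_nonneg (convex_Icc t₀ t) hgcont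
    · intro s hs
      rw [interior_Icc] at hs
      exact ((hgder s (ht₀.trans hs.1.le)).differentiableAt).differentiableWithinAt
    · intro s hs
      rw [interior_Icc] at hs
      have hs0 : 0 ≤ s := ht₀.trans hs.1.le
      rw [(hgder s hs0).deriv]
      have := hδ'_le s hs0
      linarith
  have hgt₀ : g t₀ = 0 := by simp [hg, hfix]
  have hg_nonneg : ∀ s ∈ Icc t₀ t, 0 ≤ g s := by
    intro s hs
    have := hmono (left_mem_Icc.mpr ht) hs hs.1
    rwa [hgt₀] at this
  have hgt : 0 ≤ t - δ t := hg_nonneg t (right_mem_Icc.mpr ht)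
  -- pointwise bound
  have hpt : ∀ s ∈ Icc t₀ t,
      (1 + s) ^ (γ - 1) * φ (s - δ s) ≤ c * ((1 - δ' s) * F (g s)) := by
    intro s hs
    have hs0 : 0 ≤ s := ht₀.trans hs.1
    have hg0 : 0 ≤ g s := hg_nonneg s hs
    have hδs : δ s ≤ τ := hδ_le s hs0
    have hδs0 : 0 ≤ δ s := hδ_nonneg s hs0
    have h1s : (0:ℝ) < 1 + s := by linarith
    have h1g : (0:ℝ) < 1 + g s := by linarith
    have hFgs : F (g s) = (1 + g s) ^ (γ - 1) * φ (g s) := by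
      simp [hF, max_eq_left hg0]
    have hAB : (1 + s) ^ (γ - 1) ≤ M * (1 + g s) ^ (γ - 1) := by
      rcases le_or_gt 0 (γ - 1) with hγ | hγ
      · have hle : 1 + s ≤ (1 + g s) * (1 + τ) := by
          have : s = g s + δ s := by simp [hg]
          nlinarith
        calc (1 + s) ^ (γ - 1) ≤ ((1 + g s) * (1 + τ)) ^ (γ - 1) :=
              Real.rpow_le_rpow h1s.le hle hγ
          _ = (1 + g s) ^ (γ - 1) * (1 + τ) ^ (γ - 1) :=
              Real.mul_rpow h1g.le (by linarith)
          _ ≤ (1 + g s) ^ (γ - 1) * M :=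
              mul_le_mul_of_nonneg_left (le_max_right _ _)
                (Real.rpow_nonneg h1g.le _)
          _ = M * (1 + g s) ^ (γ - 1) := mul_comm _ _
      · have hle : 1 + g s ≤ 1 + s := by
          simp only [hg]; linarith
        calc (1 + s) ^ (γ - 1) ≤ (1 + g s) ^ (γ - 1) :=
              Real.rpow_le_rpow_of_nonpos h1g hle hγ.le
          _ ≤ M * (1 + g s) ^ (γ - 1) :=
              le_mul_of_one_le_left (Real.rpow_nonneg h1g.le _) hM1
    have hkey : M ≤ c * (1 - δ' s) := by
      rw [hc, div_mul_eq_mul_div, le_div_iff₀ h1η]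
      have := hδ'_le s hs0
      nlinarith
    have hBp : 0 ≤ (1 + g s) ^ (γ - 1) * φ (g s) :=
      mul_nonneg (Real.rpow_nonneg h1g.le _) (hφ_nonneg _)
    have hgs : s - δ s = g s := rfl
    rw [hgs, hFgs]
    calc (1 + s) ^ (γ - 1) * φ (g s)
        ≤ (M * (1 + g s) ^ (γ - 1)) * φ (g s) :=
          mul_le_mul_of_nonneg_right hAB (hφ_nonneg _)
      _ = M * ((1 + g s) ^ (γ - 1) * φ (g s)) := by ring
      _ ≤ (c * (1 - δ' s)) * ((1 + g s) ^ (γ - 1) * φ (g s)) :=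
          mul_le_mul_of_nonneg_right hkey hBp
      _ = c * ((1 - δ' s) * ((1 + g s) ^ (γ - 1) * φ (g s))) := by ring
  -- integrability
  have hcontIcc : ∀ x ∈ uIcc t₀ t, (0:ℝ) ≤ x := by
    intro x hx
    rw [huIcc] at hx
    exact ht₀.trans hx.1
  have hgcont' : ContinuousOn g (uIcc t₀ t) := huIcc ▸ hgcont
  have int1 : IntervalIntegrable (fun s => (1 + s) ^ (γ - 1) * φ (s - δ s))
      volume t₀ t := by
    apply ContinuousOn.intervalIntegrable
    apply ContinuousOn.mul
    · apply ContinuousOn.rpow_const (continuousOn_const.add continuousOn_id)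
      intro x hx
      exact Or.inl (show (1:ℝ) + x ≠ 0 by have := hcontIcc x hx; positivity)
    · exact hφ_cont.comp_continuousOn hgcont'
  have int2 : IntervalIntegrable (fun s => c * ((1 - δ' s) * F (g s)))
      volume t₀ t := by
    apply ContinuousOn.intervalIntegrable
    apply ContinuousOn.mul continuousOn_const
    apply ContinuousOn.mul
    · exact continuousOn_const.sub (hδ'_cont.mono (fun x hx => hcontIcc x hx))
    · exact hFcont.comp_continuousOn hgcont'
  -- change of variables
  have cov : ∫ s in t₀..t, (1 - δ' s) • F (g s) = ∫ r in g t₀..g t, F r :=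
    intervalIntegral.integral_comp_smul_deriv (f := g) (f' := fun s => 1 - δ' s)
      (g := F) (a := t₀) (b := t)
      (fun x hx => hgder x (hcontIcc x hx))
      (continuousOn_const.sub (hδ'_cont.mono (fun x hx => hcontIcc x hx)))
      hFcont
  have hFeq : ∫ r in (0:ℝ)..(t - δ t), F r
      = ∫ r in (0:ℝ)..(t - δ t), (1 + r) ^ (γ - 1) * φ r := by
    apply intervalIntegral.integral_congr
    intro r hr
    rw [uIcc_of_le hgt] at hr
    simp [hF, max_eq_left hr.1]
  calc ∫ s in t₀..t, (1 + s) ^ (γ - 1) * φ (s - δ s)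
      ≤ ∫ s in t₀..t, c * ((1 - δ' s) * F (g s)) :=
        intervalIntegral.integral_mono_on ht int1 int2 hpt
    _ = c * ∫ s in t₀..t, (1 - δ' s) • F (g s) := by
        rw [intervalIntegral.integral_const_mul]
        simp [smul_eq_mul]
    _ = c * ∫ r in g t₀..g t, F r := by rw [cov]
    _ = c * ∫ r in (0:ℝ)..(t - δ t), (1 + r) ^ (γ - 1) * φ r := by
        rw [hgt₀, ← hFeq]
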